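/- The function ζ(u) = u⁻⁴(1-u²)^{2λ} h(u), where h(u) = 1 - 2u² + C₄ u²(1-u²) + 2u²(1-u²)(log(1-u²) - 2 log u), solves the ODE -(1/2)(u⁻¹ - u) ζ'(u) - (u⁻² + 2λ) ζ(u) = u⁻⁶(1-u²)^{2λ} on (0,1), for any constants λ > 0 and C₄ ∈ ℝ. -/

import Mathlib

/-- The profile `ζ(u) = u⁻⁴(1-u²)^(2λ) h(u)` with
`h(u) = 1 - 2u² + C₄ u²(1-u²) + 2u²(1-u²)(log(1-u²) - 2 log u)` solves
`-(1/2)(u⁻¹ - u) ζ' - (u⁻² + 2λ) ζ = u⁻⁶(1-u²)^(2λ)` on `(0,1)`. -/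
theorem zeta_solves_ODE (lam C₄ : ℝ) (hlam : 0 < lam) :
    ∀ u ∈ Set.Ioo (0 : ℝ) 1,
      DifferentiableAt ℝ
        (fun u : ℝ => (1 - u ^ 2) ^ (2 * lam)
          * (1 - 2 * u ^ 2 + C₄ * u ^ 2 * (1 - u ^ 2)
              + 2 * u ^ 2 * (1 - u ^ 2) * (Real.log (1 - u ^ 2) - 2 * Real.log u)) / u ^ 4) u ∧
      -(1 / 2) * (u⁻¹ - u)
          * deriv (fun u : ℝ => (1 - u ^ 2) ^ (2 * lam)
              * (1 - 2 * u ^ 2 + C₄ * u ^ 2 * (1 - u ^ 2)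
                  + 2 * u ^ 2 * (1 - u ^ 2) * (Real.log (1 - u ^ 2) - 2 * Real.log u)) / u ^ 4) u
        - (u⁻¹ ^ 2 + 2 * lam)
            * ((1 - u ^ 2) ^ (2 * lam)
                * (1 - 2 * u ^ 2 + C₄ * u ^ 2 * (1 - u ^ 2)
                    + 2 * u ^ 2 * (1 - u ^ 2) * (Real.log (1 - u ^ 2) - 2 * Real.log u)) / u ^ 4)
        = (1 - u ^ 2) ^ (2 * lam) / u ^ 6 := by
  rintro u ⟨hu0, hu1⟩
  have hu : u ≠ 0 := ne_of_gt hu0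
  have h1u : (0:ℝ) < 1 - u ^ 2 := by nlinarith
  have h1u' : (1:ℝ) - u ^ 2 ≠ 0 := ne_of_gt h1u
  have hinner : HasDerivAt (fun u : ℝ => 1 - u ^ 2) (0 - 2 * u ^ 1) u := by
    simpa using (hasDerivAt_const u (1:ℝ)).fun_sub (hasDerivAt_pow 2 u)
  have hA : HasDerivAt (fun u : ℝ => (1 - u ^ 2) ^ (2 * lam))
      ((0 - 2 * u ^ 1) * (2 * lam) * (1 - u ^ 2) ^ (2 * lam - 1)) u :=
    hinner.rpow_const (Or.inl h1u')
  have hlog1 : HasDerivAt (fun u : ℝ => Real.log (1 - u ^ 2)) ((0 - 2 * u ^ 1) / (1 - u ^ 2)) u :=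
    hinner.log h1u'
  have hlogu : HasDerivAt (fun u : ℝ => 2 * Real.log u) (2 * u⁻¹) u :=
    (Real.hasDerivAt_log hu).const_mul 2
  have hL := hlog1.fun_sub hlogu
  have hp1 : HasDerivAt (fun u : ℝ => 1 - 2 * u ^ 2) (0 - 2 * (2 * u ^ 1)) u :=
    (hasDerivAt_const u (1:ℝ)).sub ((hasDerivAt_pow 2 u).const_mul 2)
  have hp2 := ((hasDerivAt_pow 2 u).const_mul C₄).fun_mul hinner
  have hp3 := (((hasDerivAt_pow 2 u).const_mul 2).fun_mul hinner).fun_mul hL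
  have hh := (hp1.fun_add hp2).fun_add hp3
  have hnum := hA.fun_mul hh
  have hz := hnum.fun_div (hasDerivAt_pow 4 u) (pow_ne_zero 4 hu)
  refine ⟨hz.differentiableAt, ?_⟩
  rw [hz.deriv]
  have hAB : (1 - u ^ 2) ^ (2 * lam) = (1 - u ^ 2) ^ (2 * lam - 1) * (1 - u ^ 2) := by
    rw [← Real.rpow_add_one h1u']; ring_nf
  rw [hAB]
  set B := (1 - u ^ 2) ^ (2 * lam - 1) with hB
  have hBne : B ≠ 0 := by
    rw [hB]; exact (Real.rpow_pos_of_pos h1u _).ne'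
  field_simp
  ring
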